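/- arXiv:1810.12127 — 2 statements merged into one kernel-verified Lean document; each statement's English description precedes it below -/
import Mathlib

section
/- Fix k > 0. On ℝ² with canonical coordinates (s, p_s) satisfying {s, p_s} = 1, define K₀ = k + (s² + p_s²)/2, K₁ = (s/2)·√(4k + s² + p_s²), K₂ = (p_s/2)·√(4k + s² + p_s²). Then these functions satisfy the su(1,1) relations {K₀, K₁} = -K₂, {K₁, K₂} = K₀, {K₀, K₂} = K₁. -/
/-- Partial derivative in the first variable. -/
noncomputable def pds (F : ℝ → ℝ → ℝ) (s p : ℝ) : ℝ := deriv (fun x => F x p) s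

/-- Partial derivative in the second variable. -/
noncomputable def pdp (F : ℝ → ℝ → ℝ) (s p : ℝ) : ℝ := deriv (fun y => F s y) p

/-- Canonical Poisson bracket on ℝ² with coordinates `(s, p_s)`:
`{F,G} = ∂F/∂s ∂G/∂p_s - ∂F/∂p_s ∂G/∂s`. -/
noncomputable def pb (F G : ℝ → ℝ → ℝ) (s p : ℝ) : ℝ :=
  pds F s p * pdp G s p - pdp F s p * pds G s p

lemma sqrt_deriv (c x : ℝ) (h : 0 < c + x ^ 2) :
    HasDerivAt (fun t => Real.sqrt (c + t ^ 2)) (x / Real.sqrt (c + x ^ 2)) x := by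
  have hin : HasDerivAt (fun t : ℝ => c + t ^ 2) (2 * x) x := by
    simpa using (hasDerivAt_pow 2 x).const_add c
  have hs := (Real.hasDerivAt_sqrt h.ne').comp x hin
  refine hs.congr_deriv ?_
  have hne : Real.sqrt (c + x ^ 2) ≠ 0 := ne_of_gt (Real.sqrt_pos.mpr h)
  field_simp

/-- The canonical realization of su(1,1):
`K₀ = k + (s² + p_s²)/2`, `K₁ = (s/2)√(4k + s² + p_s²)`, `K₂ = (p_s/2)√(4k + s² + p_s²)`
satisfy `{K₀,K₁} = -K₂`, `{K₁,K₂} = K₀`, `{K₀,K₂} = K₁`. -/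
theorem su11_canonical_realization (k : ℝ) (hk : 0 < k) :
    let K0 : ℝ → ℝ → ℝ := fun s p => k + (s ^ 2 + p ^ 2) / 2
    let K1 : ℝ → ℝ → ℝ := fun s p => (s / 2) * Real.sqrt (4 * k + s ^ 2 + p ^ 2)
    let K2 : ℝ → ℝ → ℝ := fun s p => (p / 2) * Real.sqrt (4 * k + s ^ 2 + p ^ 2)
    ∀ s p : ℝ,
      pb K0 K1 s p = -K2 s p ∧ pb K1 K2 s p = K0 s p ∧ pb K0 K2 s p = K1 s p := by
  intro K0 K1 K2 s p
  have hRpos : (0:ℝ) < 4 * k + s ^ 2 + p ^ 2 := by positivity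
  set R := 4 * k + s ^ 2 + p ^ 2 with hR
  have hrne : Real.sqrt R ≠ 0 := by
    positivity
  have hsq : Real.sqrt R * Real.sqrt R = R := Real.mul_self_sqrt hRpos.le
  have hsq2 : Real.sqrt R * Real.sqrt R = 4 * k + s ^ 2 + p ^ 2 := by rw [hsq]
  -- derivative of sqrt in s
  have hds : HasDerivAt (fun x => Real.sqrt (4 * k + x ^ 2 + p ^ 2)) (s / Real.sqrt R) s := by
    have := sqrt_deriv (4 * k + p ^ 2) s (by positivity)
    simp only [show ∀ t : ℝ, 4 * k + p ^ 2 + t ^ 2 = 4 * k + t ^ 2 + p ^ 2 from fun t => by ring]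
      at this
    simpa [hR] using this
  have hdp : HasDerivAt (fun y => Real.sqrt (4 * k + s ^ 2 + y ^ 2)) (p / Real.sqrt R) p := by
    have := sqrt_deriv (4 * k + s ^ 2) p (by positivity)
    simpa [hR, add_assoc] using this
  -- partials of K0
  have h0s : pds K0 s p = s := by
    have : HasDerivAt (fun x : ℝ => k + (x ^ 2 + p ^ 2) / 2) s s := by
      have h1 : HasDerivAt (fun x : ℝ => x ^ 2 + p ^ 2) (2 * s) s := by
        simpa using (hasDerivAt_pow 2 s).add_const (p ^ 2)
      simpa using (h1.div_const 2).const_add k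
    simpa [pds, K0] using this.deriv
  have h0p : pdp K0 s p = p := by
    have : HasDerivAt (fun y : ℝ => k + (s ^ 2 + y ^ 2) / 2) p p := by
      have h1 : HasDerivAt (fun y : ℝ => s ^ 2 + y ^ 2) (2 * p) p := by
        simpa using (hasDerivAt_pow 2 p).const_add (s ^ 2)
      simpa using (h1.div_const 2).const_add k
    simpa [pdp, K0] using this.deriv
  -- partials of K1
  have h1s : pds K1 s p = (1 / 2) * Real.sqrt R + (s / 2) * (s / Real.sqrt R) := by
    have hlin : HasDerivAt (fun x : ℝ => x / 2) (1 / 2) s := by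
      simpa using (hasDerivAt_id s).div_const 2
    have := hlin.mul hds
    exact this.deriv
  have h1p : pdp K1 s p = (s / 2) * (p / Real.sqrt R) := by
    have := hdp.const_mul (s / 2)
    simpa [pdp, K1, hR] using this.deriv
  -- partials of K2
  have h2s : pds K2 s p = (p / 2) * (s / Real.sqrt R) := by
    have := hds.const_mul (p / 2)
    simpa [pds, K2, hR] using this.deriv
  have h2p : pdp K2 s p = (1 / 2) * Real.sqrt R + (p / 2) * (p / Real.sqrt R) := by
    have hlin : HasDerivAt (fun y : ℝ => y / 2) (1 / 2) p := by
      simpa using (hasDerivAt_id p).div_const 2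
    have := hlin.mul hdp
    exact this.deriv
  refine ⟨?_, ?_, ?_⟩
  · simp only [pb, h0s, h0p, h1s, h1p, K2]
    field_simp
    ring
  · simp only [pb, h1s, h1p, h2s, h2p, K0]
    field_simp
    linear_combination Real.sqrt R ^ 2 * hsq2
  · simp only [pb, h0s, h0p, h2s, h2p, K1]
    field_simp
    ring
end

section
/- In the Lie algebra of second-order moments for N degrees of freedom, the adjoint action of any generator Δ(q_i q_j) is nilpotent: applying ad(Δ(q_i q_j)) three times to any element yields zero. -/
open Matrix

/-- The canonical symplectic matrix `τ = ((0, I_N), (-I_N, 0))`; indices `Sum.inl i`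
are positions `q_i`, indices `Sum.inr i` are momenta `π_i`. -/
def tau (N : ℕ) : Matrix (Fin N ⊕ Fin N) (Fin N ⊕ Fin N) ℝ :=
  Matrix.fromBlocks 0 1 (-1) 0

/-- The generator `Δ(x_a x_b)` of the second-order moment algebra, realized as the
symmetric matrix `E_{ab} + E_{ba}`. -/
noncomputable def gen (N : ℕ) (a b : Fin N ⊕ Fin N) :
    Matrix (Fin N ⊕ Fin N) (Fin N ⊕ Fin N) ℝ :=
  Matrix.single a b 1 + Matrix.single b a 1

/-- The Lie bracket of the moment algebra on symmetric matrices, realizing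
`{Δ_{ij}, Δ_{kl}} = τ_{ik}Δ_{jl} + τ_{il}Δ_{jk} + τ_{jk}Δ_{il} + τ_{jl}Δ_{ik}`. -/
noncomputable def momentBracket (N : ℕ) (V W : Matrix (Fin N ⊕ Fin N) (Fin N ⊕ Fin N) ℝ) :
    Matrix (Fin N ⊕ Fin N) (Fin N ⊕ Fin N) ℝ :=
  V * tau N * W - W * tau N * V

lemma gen_tau_gen (N : ℕ) (i j : Fin N) :
    gen N (Sum.inl i) (Sum.inl j) * tau N * gen N (Sum.inl i) (Sum.inl j) = 0 := by
  ext a b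
  simp only [Matrix.mul_apply, Matrix.zero_apply, gen, tau, Matrix.add_apply,
    Matrix.single, Matrix.of_apply]
  apply Finset.sum_eq_zero
  intro x _
  rcases x with x | x
  · rw [mul_eq_zero]
    left
    apply Finset.sum_eq_zero
    intro y _
    rcases y with y | y
    · simp [Matrix.fromBlocks]
    · simp
  · simp

/-- The adjoint action of any `Δ(q_i q_j)` on the moment algebra is nilpotent:
`ad(Δ(q_i q_j))³ = 0`. -/
theorem ad_qq_nilpotent (N : ℕ) (i j : Fin N)
    (M : Matrix (Fin N ⊕ Fin N) (Fin N ⊕ Fin N) ℝ) (hM : M.IsSymm) :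
    momentBracket N (gen N (Sum.inl i) (Sum.inl j))
      (momentBracket N (gen N (Sum.inl i) (Sum.inl j))
        (momentBracket N (gen N (Sum.inl i) (Sum.inl j)) M)) = 0 := by
  set G := gen N (Sum.inl i) (Sum.inl j) with hG
  have h : G * tau N * G = 0 := gen_tau_gen N i j
  set X := G * tau N with hX
  set Y := tau N * G with hY
  have hXX : X * X = 0 := by
    rw [hX, Matrix.mul_assoc, ← Matrix.mul_assoc (tau N) G (tau N),
      ← Matrix.mul_assoc G, ← Matrix.mul_assoc G, h, Matrix.zero_mul]
  have hYY : Y * Y = 0 := by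
    rw [hY, Matrix.mul_assoc, ← Matrix.mul_assoc G (tau N) G, h, Matrix.mul_zero]
  have hXX' : ∀ V, X * (X * V) = 0 := fun V => by
    rw [← Matrix.mul_assoc, hXX, Matrix.zero_mul]
  have expand : ∀ V, momentBracket N G V = X * V - V * Y := fun V => by
    simp [momentBracket, hX, hY, Matrix.mul_assoc]
  rw [expand, expand, expand]
  simp [Matrix.mul_sub, Matrix.sub_mul, Matrix.mul_assoc, hXX', hYY]
end
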